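/- Let D be a pv-monoid and let ζ be a w_pvm-PCL formula over ports P and D. Then for every configuration γ ∈ C(P), the semantics of the closure ∼ζ := ζ ⊕ (ζ ⊎ 1) satisfies ‖∼ζ‖(γ) = ⊕_{γ' ⊆ γ, γ' ≠ ∅} ‖ζ‖(γ'). -/
import Mathlib


/-- Syntax of propositional interaction logic (PIL) over a set of ports `P`. -/
inductive PIL (P : Type) where
  | tt : PIL P
  | port : P → PIL P
  | neg : PIL P → PIL P
  | disj : PIL P → PIL P → PIL P

/-- Satisfaction of a PIL formula by an interaction (a finite set of ports). -/
def PILsat {P : Type} (α : Finset P) : PIL P → Prop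
  | .tt => True
  | .port p => p ∈ α
  | .neg φ => ¬ PILsat α φ
  | .disj φ ψ => PILsat α φ ∨ PILsat α ψ

/-- Syntax of propositional configuration logic (PCL) over ports `P`. -/
inductive PCL (P : Type) where
  | tt : PCL P
  | pil : PIL P → PCL P
  | neg : PCL P → PCL P
  | union : PCL P → PCL P → PCL P
  | coal : PCL P → PCL P → PCL P

/-- Satisfaction of a PCL formula by a configuration (a finite set of interactions). -/
def PCLsat {P : Type} [DecidableEq P] : Finset (Finset P) → PCL P → Prop
  | _, .tt => True
  | γ, .pil φ => ∀ a ∈ γ, PILsat a φ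
  | γ, .neg f => ¬ PCLsat γ f
  | γ, .union f g => PCLsat γ f ∨ PCLsat γ g
  | γ, .coal f g => ∃ γ₁ γ₂ : Finset (Finset P),
      γ₁.Nonempty ∧ γ₂.Nonempty ∧ γ₁ ∪ γ₂ = γ ∧ PCLsat γ₁ f ∧ PCLsat γ₂ g

/-- Syntax of weighted PCL over ports `P` and a pv-monoid with carrier `D`. -/
inductive WPCL (P D : Type) where
  | const : D → WPCL P D
  | pcl : PCL P → WPCL P D
  | oplus : WPCL P D → WPCL P D → WPCL P D
  | otimes : WPCL P D → WPCL P D → WPCL P D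
  | coal : WPCL P D → WPCL P D → WPCL P D
  | star : WPCL P D → WPCL P D

open scoped Classical in
/-- Semantics of weighted PCL formulas.  The pv-monoid is given by an additive
commutative monoid `D` (the `⊕` operation and `0`), a multiplication `ot` (`⊗`),
a unit `one` and a symmetric valuation function `val` on nonempty multisets. -/
noncomputable def sem {P D : Type} [DecidableEq P] [AddCommMonoid D]
    (ot : D → D → D) (one : D) (val : Multiset D → D) :
    WPCL P D → Finset (Finset P) → D
  | .const d, _ => d
  | .pcl f, γ => if PCLsat γ f then one else 0
  | .oplus ζ₁ ζ₂, γ => sem ot one val ζ₁ γ + sem ot one val ζ₂ γ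
  | .otimes ζ₁ ζ₂, γ => ot (sem ot one val ζ₁ γ) (sem ot one val ζ₂ γ)
  | .coal ζ₁ ζ₂, γ =>
      ∑ p ∈ (γ.powerset ×ˢ γ.powerset).filter
        (fun p => p.1.Nonempty ∧ p.2.Nonempty ∧ Disjoint p.1 p.2 ∧ p.1 ∪ p.2 = γ),
        ot (sem ot one val ζ₁ p.1) (sem ot one val ζ₂ p.2)
  | .star ζ, γ =>
      ∑ Q ∈ γ.powerset.powerset.filter
        (fun Q => Q.Nonempty ∧ (∀ x ∈ Q, x.Nonempty) ∧
          (∀ x ∈ Q, ∀ y ∈ Q, x ≠ y → Disjoint x y) ∧ Q.sup id = γ),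
        val (Q.val.map (fun x => sem ot one val ζ x))

/-- `γ` is a configuration: a nonempty set of (nonempty) interactions. -/
def Config {P : Type} (γ : Finset (Finset P)) : Prop :=
  γ.Nonempty ∧ ∀ a ∈ γ, a.Nonempty

/-- The axioms of an (idempotent) product valuation monoid, on top of the
additive commutative monoid structure `(D, +, 0)`. -/
structure IsPVM (D : Type) [AddCommMonoid D]
    (ot : D → D → D) (one : D) (val : Multiset D → D) : Prop where
  zero_ot : ∀ d, ot 0 d = 0
  ot_zero : ∀ d, ot d 0 = 0
  one_ot : ∀ d, ot one d = d
  ot_one : ∀ d, ot d one = d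
  val_singleton : ∀ d, val {d} = d
  val_zero : ∀ m : Multiset D, (0 : D) ∈ m → val m = 0
  val_one : ∀ n : ℕ, 1 ≤ n → val (Multiset.replicate n one) = one
  idem : ∀ d : D, d + d = d

/-- The wclosure `∼ζ := ζ ⊕ (ζ ⊎ 1)` of a weighted PCL formula. -/
def wclosure {P D : Type} (one : D) (ζ : WPCL P D) : WPCL P D :=
  ζ.oplus (ζ.coal (.const one))

theorem stmt7 {P D : Type} [DecidableEq P] [AddCommMonoid D]
    (ot : D → D → D) (one : D) (val : Multiset D → D)
    (hpvm : IsPVM D ot one val) (ζ : WPCL P D) (γ : Finset (Finset P)) (hγ : Config γ) :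
    sem ot one val (wclosure one ζ) γ
      = ∑ γ' ∈ γ.powerset.filter Finset.Nonempty, sem ot one val ζ γ' := by
  classical
  unfold wclosure
  simp only [sem, hpvm.ot_one]
  have hmem : γ ∈ γ.powerset.filter Finset.Nonempty := by
    simp [Finset.mem_powerset, hγ.1]
  rw [← Finset.add_sum_erase _ _ hmem]
  congr 1
  have herase : (γ.powerset.filter Finset.Nonempty).erase γ
      = γ.powerset.filter (fun s => s.Nonempty ∧ s ≠ γ) := by
    ext s
    simp only [Finset.mem_erase, Finset.mem_filter, Finset.mem_powerset]
    tauto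
  rw [herase]
  refine Finset.sum_bij' (fun p _ => p.1) (fun s _ => (s, γ \ s)) ?_ ?_ ?_ ?_ ?_
  · rintro ⟨a, b⟩ hp
    simp only [Finset.mem_filter, Finset.mem_product, Finset.mem_powerset] at hp ⊢
    obtain ⟨⟨ha, hb⟩, hna, hnb, hd, hu⟩ := hp
    refine ⟨ha, hna, fun h => ?_⟩
    subst h
    obtain ⟨x, hx⟩ := hnb
    exact (Finset.disjoint_left.mp hd (hu ▸ Finset.mem_union_right a hx) hx).elim
  · intro s hs
    simp only [Finset.mem_filter, Finset.mem_product, Finset.mem_powerset] at hs ⊢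
    obtain ⟨hsub, hne, hneq⟩ := hs
    refine ⟨⟨hsub, Finset.sdiff_subset⟩, hne, ?_, Finset.disjoint_sdiff,
      Finset.union_sdiff_of_subset hsub⟩
    rw [Finset.sdiff_nonempty]
    intro h
    exact hneq (le_antisymm hsub h)
  · rintro ⟨a, b⟩ hp
    simp only [Finset.mem_filter, Finset.mem_product, Finset.mem_powerset] at hp
    obtain ⟨⟨ha, hb⟩, hna, hnb, hd, hu⟩ := hp
    have : γ \ a = b := by
      rw [← hu, Finset.union_sdiff_cancel_left hd]
    simp [this]
  · intro s hs; rfl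
  · intro p hp; rfl
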